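/- arXiv:2603.01483 — 3 statements merged into one kernel-verified Lean document; each statement's English description precedes it below -/
import Mathlib

section
/- Let E ⊆ M₂(ℂ) be a linear subspace. The following are equivalent: (1) 𝔽 = 𝔽_{μ_E}; (2) μ_E(A) = ‖A‖ for all A ∈ M₂(ℂ); (3) for every pair of unit vectors u, v ∈ ℂ² there exists A ∈ E with ‖A‖ = 1 such that Au = v. -/
/-- The operator norm of a 2×2 complex matrix, acting on the Euclidean space ℂ². -/
noncomputable def opNorm (A : Matrix (Fin 2) (Fin 2) ℂ) : ℝ :=
  ‖LinearMap.toContinuousLinearMap (Matrix.toEuclideanLin A)‖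

/-- The domain 𝔽 = {(a₁₁, a₂₂, det A, a₁₂ + a₂₁) : A ∈ M₂(ℂ), ‖A‖ < 1}. -/
noncomputable def domF : Set (ℂ × ℂ × ℂ × ℂ) :=
  {w | ∃ A : Matrix (Fin 2) (Fin 2) ℂ, opNorm A < 1 ∧
    w = (A 0 0, A 1 1, A.det, A 0 1 + A 1 0)}

open scoped Classical in
/-- The structured singular value μ_E(A) relative to a structure set E ⊆ M₂(ℂ). -/
noncomputable def mu (E : Set (Matrix (Fin 2) (Fin 2) ℂ)) (A : Matrix (Fin 2) (Fin 2) ℂ) : ℝ :=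
  if ∃ X ∈ E, (1 - A * X).det = 0 then
    (sInf {r : ℝ | ∃ X ∈ E, (1 - A * X).det = 0 ∧ r = opNorm X})⁻¹
  else 0

/-- 𝔽_{μ_E} = {(a₁₁, a₂₂, det A, a₁₂ + a₂₁) : A ∈ M₂(ℂ), μ_E(A) < 1}. -/
noncomputable def Fmu (E : Set (Matrix (Fin 2) (Fin 2) ℂ)) : Set (ℂ × ℂ × ℂ × ℂ) :=
  {w | ∃ A : Matrix (Fin 2) (Fin 2) ℂ, mu E A < 1 ∧
    w = (A 0 0, A 1 1, A.det, A 0 1 + A 1 0)}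

/-! ### Auxiliary material -/

namespace Stmt17Aux

open Matrix
open scoped Matrix.Norms.L2Operator Pointwise

abbrev Mat := Matrix (Fin 2) (Fin 2) ℂ
abbrev E2 := EuclideanSpace ℂ (Fin 2)

lemma toEuclideanLin_apply_piLp_equiv_symm (M : Mat) (v : Fin 2 → ℂ) :
    Matrix.toEuclideanLin M ((WithLp.equiv 2 (Fin 2 → ℂ)).symm v) =
      (WithLp.equiv 2 (Fin 2 → ℂ)).symm (M *ᵥ v) := rfl

lemma piLp_equiv_toEuclideanLin_apply (M : Mat) (v : E2) :
    WithLp.equiv 2 (Fin 2 → ℂ) (Matrix.toEuclideanLin M v) =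
      M *ᵥ (WithLp.equiv 2 (Fin 2 → ℂ) v) := rfl

lemma opNorm_eq_norm (A : Mat) : opNorm A = ‖A‖ := rfl

lemma toEuclideanLin_le (A : Mat) (x : E2) :
    ‖Matrix.toEuclideanLin A x‖ ≤ ‖A‖ * ‖x‖ :=
  (LinearMap.toContinuousLinearMap (Matrix.toEuclideanLin A)).le_opNorm x

lemma continuous_detOneSub (A : Mat) : Continuous fun X : Mat => (1 - A * X).det :=
  Continuous.matrix_det (continuous_const.sub (LinearMap.mulLeft ℂ A).continuous_of_finiteDimensional)

lemma det_one_sub_iff (M : Mat) : (1 - M).det = 0 ↔ ∃ v ≠ 0, M.mulVec v = v := by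
  rw [← Matrix.exists_mulVec_eq_zero_iff]
  constructor
  · rintro ⟨v, hv, h⟩
    rw [Matrix.sub_mulVec, Matrix.one_mulVec, sub_eq_zero] at h
    exact ⟨v, hv, h.symm⟩
  · rintro ⟨v, hv, h⟩
    exact ⟨v, hv, by rw [Matrix.sub_mulVec, Matrix.one_mulVec, h, sub_self]⟩

lemma one_le_norm_of_fixed (M : Mat) (v : Fin 2 → ℂ) (hv : v ≠ 0) (h : M.mulVec v = v) :
    1 ≤ ‖M‖ := by
  set x : E2 := (WithLp.equiv 2 _).symm v with hx
  have hx0 : x ≠ 0 := by simpa [hx] using hv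
  have hMx : Matrix.toEuclideanLin M x = x := by
    rw [hx, toEuclideanLin_apply_piLp_equiv_symm, h]
  have hle := toEuclideanLin_le M x
  rw [hMx] at hle
  have hxpos : 0 < ‖x‖ := norm_pos_iff.mpr hx0
  nlinarith

lemma one_le_norm_of_det (M : Mat) (h : (1 - M).det = 0) : 1 ≤ ‖M‖ := by
  obtain ⟨v, hv, hfix⟩ := (det_one_sub_iff M).mp h
  exact one_le_norm_of_fixed M v hv hfix

section muFacts

variable (E : Set Mat) (A : Mat)

/-- The set of norms entering the definition of `mu`. -/
def SS : Set ℝ := {r : ℝ | ∃ X ∈ E, (1 - A * X).det = 0 ∧ r = opNorm X}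

lemma SS_nonneg : ∀ r ∈ SS E A, 0 ≤ r := by
  rintro r ⟨X, -, -, rfl⟩
  rw [opNorm_eq_norm]
  exact norm_nonneg X

lemma SS_bddBelow : BddBelow (SS E A) := ⟨0, fun r hr => SS_nonneg E A r hr⟩

lemma one_le_mul_of_mem_SS {r : ℝ} (hr : r ∈ SS E A) : 1 ≤ r * ‖A‖ := by
  obtain ⟨X, -, hdet, rfl⟩ := hr
  calc (1:ℝ) ≤ ‖A * X‖ := one_le_norm_of_det _ hdet
    _ ≤ ‖A‖ * ‖X‖ := Matrix.l2_opNorm_mul A X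
    _ = opNorm X * ‖A‖ := by rw [opNorm_eq_norm]; ring

lemma mu_of_nonempty (h : ∃ X ∈ E, (1 - A * X).det = 0) :
    mu E A = (sInf (SS E A))⁻¹ := by
  rw [mu, if_pos h]; rfl

lemma mu_of_empty (h : ¬ ∃ X ∈ E, (1 - A * X).det = 0) : mu E A = 0 := by
  rw [mu, if_neg h]

lemma SS_nonempty_of (h : ∃ X ∈ E, (1 - A * X).det = 0) : (SS E A).Nonempty := by
  obtain ⟨X, hX, hdet⟩ := h
  exact ⟨opNorm X, X, hX, hdet, rfl⟩

lemma mu_nonneg : 0 ≤ mu E A := by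
  by_cases h : ∃ X ∈ E, (1 - A * X).det = 0
  · rw [mu_of_nonempty E A h]
    exact inv_nonneg.mpr (le_csInf (SS_nonempty_of E A h) (SS_nonneg E A))
  · rw [mu_of_empty E A h]

lemma mu_le_norm : mu E A ≤ ‖A‖ := by
  by_cases h : ∃ X ∈ E, (1 - A * X).det = 0
  · have hA : ‖A‖ ≠ 0 := by
      intro h0
      obtain ⟨X, -, hdet⟩ := h
      have : A = 0 := norm_eq_zero.mp h0
      rw [this, zero_mul, sub_zero, Matrix.det_one] at hdet
      exact one_ne_zero hdet
    have hApos : 0 < ‖A‖ := lt_of_le_of_ne (norm_nonneg A) (Ne.symm hA)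
    have hlow : ‖A‖⁻¹ ≤ sInf (SS E A) := by
      refine le_csInf (SS_nonempty_of E A h) fun r hr => ?_
      have := one_le_mul_of_mem_SS E A hr
      rw [inv_le_iff_one_le_mul₀ hApos]
      linarith [this]
    rw [mu_of_nonempty E A h]
    calc (sInf (SS E A))⁻¹ ≤ (‖A‖⁻¹)⁻¹ := by
          apply inv_anti₀ (by positivity) hlow
      _ = ‖A‖ := inv_inv _
  · rw [mu_of_empty E A h]; exact norm_nonneg A

end muFacts

section scaling

variable (E : Submodule ℂ Mat)

lemma norm_real_smul (t : ℝ) (X : Mat) : opNorm ((t:ℂ) • X) = |t| * opNorm X := by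
  rw [opNorm_eq_norm, opNorm_eq_norm, norm_smul, Complex.norm_real, Real.norm_eq_abs]

lemma smul_mul_eq (t : ℝ) (A X : Mat) : ((t:ℂ) • A) * X = A * ((t:ℂ) • X) := by
  rw [smul_mul_assoc, mul_smul_comm]

lemma SS_smul {t : ℝ} (ht : 0 < t) (A : Mat) :
    SS (E : Set Mat) ((t:ℂ) • A) = t⁻¹ • SS (E : Set Mat) A := by
  ext r
  constructor
  · rintro ⟨X, hX, hdet, rfl⟩
    rw [smul_mul_eq] at hdet
    refine ⟨opNorm ((t:ℂ) • X), ⟨(t:ℂ) • X, E.smul_mem _ hX, hdet, rfl⟩, ?_⟩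
    rw [norm_real_smul, abs_of_pos ht]
    show t⁻¹ • (t * opNorm X) = opNorm X
    rw [smul_eq_mul, ← mul_assoc, inv_mul_cancel₀ ht.ne', one_mul]
  · rintro ⟨s, ⟨Y, hY, hdet, rfl⟩, rfl⟩
    refine ⟨(t⁻¹:ℂ) • Y, E.smul_mem _ hY, ?_, ?_⟩
    · have ht' : (t:ℂ) ≠ 0 := by exact_mod_cast ht.ne'
      rw [smul_mul_eq, smul_smul, mul_inv_cancel₀ ht', one_smul]
      exact hdet
    · rw [← Complex.ofReal_inv, norm_real_smul, abs_of_pos (inv_pos.mpr ht)]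
      show t⁻¹ • (opNorm Y) = t⁻¹ * opNorm Y
      rfl

lemma exists_iff_smul {t : ℝ} (ht : 0 < t) (A : Mat) :
    (∃ X ∈ (E : Set Mat), (1 - ((t:ℂ) • A) * X).det = 0) ↔
      (∃ X ∈ (E : Set Mat), (1 - A * X).det = 0) := by
  constructor
  · rintro ⟨X, hX, hdet⟩
    rw [smul_mul_eq] at hdet
    exact ⟨(t:ℂ) • X, E.smul_mem _ hX, hdet⟩
  · rintro ⟨Y, hY, hdet⟩
    refine ⟨(t⁻¹:ℂ) • Y, E.smul_mem _ hY, ?_⟩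
    have ht' : (t:ℂ) ≠ 0 := by exact_mod_cast ht.ne'
    rw [smul_mul_eq, smul_smul, mul_inv_cancel₀ ht', one_smul]
    exact hdet

lemma mu_smul {t : ℝ} (ht : 0 < t) (A : Mat) :
    mu (E : Set Mat) ((t:ℂ) • A) = t * mu (E : Set Mat) A := by
  by_cases h : ∃ X ∈ (E : Set Mat), (1 - A * X).det = 0
  · have h' := (exists_iff_smul E ht A).mpr h
    rw [mu_of_nonempty _ _ h', mu_of_nonempty _ _ h, SS_smul E ht A,
      Real.sInf_smul_of_nonneg (inv_nonneg.mpr ht.le), smul_eq_mul, mul_inv, inv_inv]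
  · have h' : ¬ ∃ X ∈ (E : Set Mat), (1 - ((t:ℂ) • A) * X).det = 0 := by
      intro hc; exact h ((exists_iff_smul E ht A).mp hc)
    rw [mu_of_empty _ _ h', mu_of_empty _ _ h, mul_zero]

end scaling

lemma exists_norming (M : Mat) :
    ∃ x : E2, ‖x‖ = 1 ∧ ‖Matrix.toEuclideanLin M x‖ = ‖M‖ := by
  have hne : (Metric.sphere (0 : E2) 1).Nonempty := by
    refine ⟨EuclideanSpace.single 0 1, ?_⟩
    simp [EuclideanSpace.norm_single]
  have hcont : Continuous fun x : E2 => ‖Matrix.toEuclideanLin M x‖ :=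
    (Matrix.toEuclideanLin M).continuous_of_finiteDimensional.norm
  obtain ⟨x, hxs, hmax⟩ := (isCompact_sphere (0 : E2) 1).exists_isMaxOn hne hcont.continuousOn
  have hx1 : ‖x‖ = 1 := by simpa using hxs
  refine ⟨x, hx1, le_antisymm ?_ ?_⟩
  · calc ‖Matrix.toEuclideanLin M x‖ ≤ ‖M‖ * ‖x‖ := toEuclideanLin_le M x
      _ = ‖M‖ := by rw [hx1, mul_one]
  · refine ContinuousLinearMap.opNorm_le_bound _ (by positivity) fun y => ?_
    rcases eq_or_ne y 0 with rfl | hy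
    · simp
    · have hyn : (0:ℝ) < ‖y‖ := norm_pos_iff.mpr hy
      have hmem : (‖y‖⁻¹ : ℂ) • y ∈ Metric.sphere (0 : E2) 1 := by
        simp [norm_smul, inv_mul_cancel₀ hyn.ne']
      have := hmax hmem
      simp only [Set.mem_setOf_eq, _root_.map_smul, norm_smul, norm_inv, Complex.norm_real,
        Real.norm_eq_abs, abs_norm] at this
      have h3 := mul_le_mul_of_nonneg_left this hyn.le
      rw [← mul_assoc, mul_inv_cancel₀ hyn.ne', one_mul] at h3
      calc ‖LinearMap.toContinuousLinearMap (Matrix.toEuclideanLin M) y‖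
          = ‖Matrix.toEuclideanLin M y‖ := rfl
        _ ≤ ‖y‖ * ‖Matrix.toEuclideanLin M x‖ := h3
        _ = ‖Matrix.toEuclideanLin M x‖ * ‖y‖ := mul_comm _ _

lemma mulVec_map_star (A : Mat) (w : Fin 2 → ℂ) :
    (A.map star) *ᵥ w = star (A *ᵥ (star w)) := by
  funext i
  simp [Matrix.mulVec, dotProduct, Matrix.map_apply, star_sum, Pi.star_apply, mul_comm]
  fin_cases i <;> simp [mul_comm]

lemma norm_star_vec (w : Fin 2 → ℂ) :
    ‖(WithLp.equiv 2 (Fin 2 → ℂ)).symm (star w)‖ = ‖(WithLp.equiv 2 (Fin 2 → ℂ)).symm w‖ := by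
  rw [EuclideanSpace.norm_eq, EuclideanSpace.norm_eq]
  congr 1
  apply Finset.sum_congr rfl
  intro i _
  simp

lemma norm_map_star_le (A : Mat) : ‖A.map star‖ ≤ ‖A‖ := by
  refine ContinuousLinearMap.opNorm_le_bound _ (norm_nonneg A) fun x => ?_
  set w := WithLp.equiv 2 (Fin 2 → ℂ) x with hw
  have hx : x = (WithLp.equiv 2 (Fin 2 → ℂ)).symm w := rfl
  calc ‖(LinearMap.toContinuousLinearMap (Matrix.toEuclideanLin (A.map star))) x‖
      = ‖(WithLp.equiv 2 (Fin 2 → ℂ)).symm ((A.map star) *ᵥ w)‖ := rfl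
    _ = ‖(WithLp.equiv 2 (Fin 2 → ℂ)).symm (star (A *ᵥ (star w)))‖ := by
        rw [mulVec_map_star]
    _ = ‖(WithLp.equiv 2 (Fin 2 → ℂ)).symm (A *ᵥ (star w))‖ := norm_star_vec _
    _ = ‖Matrix.toEuclideanLin A ((WithLp.equiv 2 (Fin 2 → ℂ)).symm (star w))‖ := by
        rw [toEuclideanLin_apply_piLp_equiv_symm]
    _ ≤ ‖A‖ * ‖(WithLp.equiv 2 (Fin 2 → ℂ)).symm (star w)‖ :=
        (LinearMap.toContinuousLinearMap (Matrix.toEuclideanLin A)).le_opNorm _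
    _ = ‖A‖ * ‖x‖ := by rw [norm_star_vec, ← hx]

lemma norm_map_star (A : Mat) : ‖A.map star‖ = ‖A‖ := by
  refine le_antisymm (norm_map_star_le A) ?_
  have : (A.map star).map star = A := by
    funext i j; simp [Matrix.map_apply]
  conv_lhs => rw [← this]
  exact norm_map_star_le (A.map star)

lemma norm_transpose (A : Mat) : ‖Aᵀ‖ = ‖A‖ := by
  have h : Aᵀ = (A.map star)ᴴ := by
    funext i j; simp [Matrix.conjTranspose_apply, Matrix.map_apply]
  rw [h, Matrix.l2_opNorm_conjTranspose, norm_map_star]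

lemma recover (A B : Mat) (h00 : B 0 0 = A 0 0) (h11 : B 1 1 = A 1 1)
    (hdet : B.det = A.det) (hs : B 0 1 + B 1 0 = A 0 1 + A 1 0) : B = A ∨ B = Aᵀ := by
  rw [Matrix.det_fin_two, Matrix.det_fin_two, h00, h11] at hdet
  have hprod : B 0 1 * B 1 0 = A 0 1 * A 1 0 := by linear_combination -hdet
  have hcase : (B 0 1 - A 0 1) * (B 0 1 - A 1 0) = 0 := by
    linear_combination B 0 1 * hs - hprod
  rcases mul_eq_zero.mp hcase with h | h
  · left
    have e1 : B 0 1 = A 0 1 := sub_eq_zero.mp h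
    have e2 : B 1 0 = A 1 0 := by linear_combination hs - e1
    funext i j
    fin_cases i <;> fin_cases j <;> assumption
  · right
    have e1 : B 0 1 = A 1 0 := sub_eq_zero.mp h
    have e2 : B 1 0 = A 0 1 := by linear_combination hs - e1
    funext i j
    fin_cases i <;> fin_cases j <;>
      simp only [Matrix.transpose_apply] <;> assumption

noncomputable def rk1 (u v : E2) : Mat := Matrix.of fun i j => u i * star (v j)

lemma rk1_apply (u v x : E2) :
    Matrix.toEuclideanLin (rk1 u v) x = (inner ℂ v x : ℂ) • u := by
  ext i
  simp only [Matrix.toEuclideanLin_apply, rk1, PiLp.smul_apply, smul_eq_mul]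
  simp [Matrix.mulVec, dotProduct, PiLp.inner_apply, Finset.sum_mul, mul_comm, mul_assoc,
    mul_left_comm, RCLike.inner_apply]
  ring

lemma rk1_norm (u v : E2) (hu : ‖u‖ = 1) (hv : ‖v‖ = 1) :
    ‖rk1 u v‖ = 1 := by
  have happ : ∀ x, Matrix.toEuclideanLin (rk1 u v) x = (inner ℂ v x : ℂ) • u := rk1_apply u v
  refine le_antisymm ?_ ?_
  · refine ContinuousLinearMap.opNorm_le_bound _ zero_le_one fun x => ?_
    calc ‖LinearMap.toContinuousLinearMap (Matrix.toEuclideanLin (rk1 u v)) x‖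
        = ‖(inner ℂ v x : ℂ) • u‖ := by rw [show (LinearMap.toContinuousLinearMap
            (Matrix.toEuclideanLin (rk1 u v))) x = Matrix.toEuclideanLin (rk1 u v) x from rfl,
            happ]
      _ = ‖(inner ℂ v x : ℂ)‖ * ‖u‖ := norm_smul _ _
      _ ≤ ‖v‖ * ‖x‖ * ‖u‖ := mul_le_mul_of_nonneg_right (norm_inner_le_norm v x) (norm_nonneg u)
      _ = 1 * ‖x‖ := by rw [hu, hv]; ring
  · have hvv : (inner ℂ v v : ℂ) = 1 := by
      rw [inner_self_eq_norm_sq_to_K, hv]; norm_num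
    have h1 : Matrix.toEuclideanLin (rk1 u v) v = u := by rw [happ, hvv, one_smul]
    have := toEuclideanLin_le (rk1 u v) v
    rw [h1, hu, hv, mul_one] at this
    exact this

lemma toEuclideanLin_mul_apply (A B : Mat) (y : E2) :
    Matrix.toEuclideanLin (A * B) y = Matrix.toEuclideanLin A (Matrix.toEuclideanLin B y) := by
  apply (WithLp.equiv 2 (Fin 2 → ℂ)).injective
  simp [piLp_equiv_toEuclideanLin_apply, Matrix.mulVec_mulVec]

lemma det_eq_zero_of_fixed_euclidean (M : Mat) (y : E2) (hy : y ≠ 0)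
    (h : Matrix.toEuclideanLin M y = y) : (1 - M).det = 0 := by
  rw [det_one_sub_iff]
  refine ⟨WithLp.equiv 2 (Fin 2 → ℂ) y, ?_, ?_⟩
  · simpa using hy
  · have := congrArg (WithLp.equiv 2 (Fin 2 → ℂ)) h
    rwa [piLp_equiv_toEuclideanLin_apply] at this

section Main

variable (E : Submodule ℂ Mat)

theorem P2_to_P1 (h : ∀ A : Mat, mu (E : Set Mat) A = opNorm A) :
    domF = Fmu (E : Set Mat) := by
  unfold domF Fmu
  ext w
  simp only [Set.mem_setOf_eq, h]

theorem P1_to_P2 (h : domF = Fmu (E : Set Mat)) :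
    ∀ A : Mat, mu (E : Set Mat) A = opNorm A := by
  intro A₀
  by_contra hne
  have hlt : mu (E : Set Mat) A₀ < opNorm A₀ :=
    lt_of_le_of_ne (mu_le_norm (E : Set Mat) A₀) hne
  have hpos : 0 < opNorm A₀ := lt_of_le_of_lt (mu_nonneg (E : Set Mat) A₀) hlt
  set t : ℝ := (opNorm A₀)⁻¹ with htdef
  have ht : 0 < t := inv_pos.mpr hpos
  set A : Mat := (t : ℂ) • A₀ with hA
  have hnormA : opNorm A = 1 := by
    rw [hA, norm_real_smul, abs_of_pos ht, htdef, opNorm_eq_norm, inv_mul_cancel₀]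
    rw [opNorm_eq_norm] at hpos
    exact hpos.ne'
  have hmuA : mu (E : Set Mat) A < 1 := by
    rw [hA, mu_smul E ht A₀]
    calc t * mu (E : Set Mat) A₀ < t * opNorm A₀ := by
          exact mul_lt_mul_of_pos_left hlt ht
      _ = 1 := by rw [htdef, inv_mul_cancel₀ hpos.ne']
  have hw : (A 0 0, A 1 1, A.det, A 0 1 + A 1 0) ∈ Fmu (E : Set Mat) := ⟨A, hmuA, rfl⟩
  rw [← h] at hw
  obtain ⟨B, hB, hweq⟩ := hw
  rw [Prod.ext_iff, Prod.ext_iff, Prod.ext_iff] at hweq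
  obtain ⟨e1, e2, e3, e4⟩ := hweq
  rcases recover A B e1.symm e2.symm e3.symm e4.symm with hBA | hBt
  · rw [hBA, hnormA] at hB; exact lt_irrefl _ hB
  · rw [hBt, opNorm_eq_norm, norm_transpose, ← opNorm_eq_norm, hnormA] at hB
    exact lt_irrefl _ hB

theorem P3_to_P2
    (h3 : ∀ u v : E2, ‖u‖ = 1 → ‖v‖ = 1 →
      ∃ A ∈ E, opNorm A = 1 ∧ Matrix.toEuclideanLin A u = v) :
    ∀ A : Mat, mu (E : Set Mat) A = opNorm A := by
  intro A
  rcases eq_or_ne A 0 with rfl | hA0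
  · have hemp : ¬ ∃ X ∈ (E : Set Mat), (1 - (0:Mat) * X).det = 0 := by
      rintro ⟨X, -, hdet⟩
      rw [zero_mul, sub_zero, Matrix.det_one] at hdet
      exact one_ne_zero hdet
    rw [mu_of_empty _ _ hemp, opNorm_eq_norm, norm_zero]
  · have hpos : 0 < ‖A‖ := norm_pos_iff.mpr hA0
    obtain ⟨x, hx1, hAx⟩ := exists_norming A
    set v : E2 := (‖A‖⁻¹ : ℂ) • Matrix.toEuclideanLin A x with hvdef
    have hv1 : ‖v‖ = 1 := by
      rw [hvdef, norm_smul, hAx]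
      simp [inv_mul_cancel₀ hpos.ne']
    obtain ⟨X, hXE, hXn, hXv⟩ := h3 v x hv1 hx1
    set X' : Mat := (‖A‖⁻¹ : ℂ) • X with hX'def
    have hX'E : X' ∈ (E : Set Mat) := E.smul_mem _ hXE
    have hfix : Matrix.toEuclideanLin (A * X') v = v := by
      rw [toEuclideanLin_mul_apply, hX'def]
      have : Matrix.toEuclideanLin ((‖A‖⁻¹ : ℂ) • X) v
          = (‖A‖⁻¹ : ℂ) • Matrix.toEuclideanLin X v := by
        simp only [_root_.map_smul, LinearMap.smul_apply]
      rw [this, hXv, _root_.map_smul, hvdef]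
    have hv0 : v ≠ 0 := fun hc => by rw [hc, norm_zero] at hv1; exact one_ne_zero hv1.symm
    have hdet : (1 - A * X').det = 0 := det_eq_zero_of_fixed_euclidean _ v hv0 hfix
    have hX'n : opNorm X' = ‖A‖⁻¹ := by
      rw [hX'def, ← Complex.ofReal_inv, norm_real_smul, abs_of_pos (inv_pos.mpr hpos), hXn,
        mul_one]
    have hne : ∃ X ∈ (E : Set Mat), (1 - A * X).det = 0 := ⟨X', hX'E, hdet⟩
    have hmem : ‖A‖⁻¹ ∈ SS (E : Set Mat) A := ⟨X', hX'E, hdet, hX'n.symm⟩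
    have hlow : ‖A‖⁻¹ ≤ sInf (SS (E : Set Mat) A) := by
      refine le_csInf (SS_nonempty_of _ _ hne) fun r hr => ?_
      have := one_le_mul_of_mem_SS (E : Set Mat) A hr
      rw [inv_le_iff_one_le_mul₀ hpos]
      linarith
    have hinf : sInf (SS (E : Set Mat) A) = ‖A‖⁻¹ :=
      le_antisymm (csInf_le (SS_bddBelow _ _) hmem) hlow
    rw [mu_of_nonempty _ _ hne, hinf, inv_inv, opNorm_eq_norm]

theorem P2_to_P3 (h : ∀ A : Mat, mu (E : Set Mat) A = opNorm A) :
    ∀ u v : E2, ‖u‖ = 1 → ‖v‖ = 1 →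
      ∃ A ∈ E, opNorm A = 1 ∧ Matrix.toEuclideanLin A u = v := by
  intro u v hu hv
  set A : Mat := rk1 u v with hAdef
  have hA : ‖A‖ = 1 := rk1_norm u v hu hv
  have hmu : mu (E : Set Mat) A = 1 := by rw [h A, opNorm_eq_norm, hA]
  have hne : ∃ X ∈ (E : Set Mat), (1 - A * X).det = 0 := by
    by_contra hc
    rw [mu_of_empty _ _ hc] at hmu; exact zero_ne_one hmu
  have hSinf : sInf (SS (E : Set Mat) A) = 1 := by
    rw [mu_of_nonempty _ _ hne] at hmu
    exact inv_eq_one.mp hmu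
  have hge : ∀ r ∈ SS (E : Set Mat) A, 1 ≤ r := fun r hr => by
    have := one_le_mul_of_mem_SS (E : Set Mat) A hr
    rwa [hA, mul_one] at this
  set K : Set Mat := (E : Set Mat) ∩ ({X | (1 - A * X).det = 0} ∩ {X | ‖X‖ ≤ 2}) with hK
  have hclosed : IsClosed K :=
    (Submodule.closed_of_finiteDimensional E).inter
      ((isClosed_eq (continuous_detOneSub A) continuous_const).inter
        (isClosed_le continuous_norm continuous_const))
  have hbdd : Bornology.IsBounded K := by
    refine (Metric.isBounded_closedBall (x := (0:Mat)) (r := 2)).subset fun X hX => ?_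
    rw [Metric.mem_closedBall, dist_zero_right]
    exact hX.2.2
  have hKcompact : IsCompact K := Metric.isCompact_of_isClosed_isBounded hclosed hbdd
  have hKne : K.Nonempty := by
    have h2 : sInf (SS (E : Set Mat) A) < 2 := by rw [hSinf]; norm_num
    obtain ⟨r, hrS, hr2⟩ := exists_lt_of_csInf_lt (SS_nonempty_of _ _ hne) h2
    obtain ⟨X, hXE, hdet, rfl⟩ := hrS
    rw [opNorm_eq_norm] at hr2
    exact ⟨X, hXE, hdet, hr2.le⟩
  obtain ⟨X, hXK, hmin⟩ := hKcompact.exists_isMinOn hKne continuous_norm.continuousOn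
  have hXE := hXK.1
  have hXdet := hXK.2.1
  have hX1 : ‖X‖ = 1 := by
    have hXge : (1:ℝ) ≤ ‖X‖ := by
      have hmem : opNorm X ∈ SS (E : Set Mat) A := ⟨X, hXE, hXdet, rfl⟩
      have := hge _ hmem
      rwa [opNorm_eq_norm] at this
    refine le_antisymm ?_ hXge
    by_contra hgt
    push_neg at hgt
    have hlt : sInf (SS (E : Set Mat) A) < min ‖X‖ 2 := by
      rw [hSinf]; exact lt_min hgt (by norm_num)
    obtain ⟨r, hrS, hrlt⟩ := exists_lt_of_csInf_lt (SS_nonempty_of _ _ hne) hlt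
    obtain ⟨Y, hYE, hYdet, rfl⟩ := hrS
    rw [opNorm_eq_norm] at hrlt
    have hYK : Y ∈ K :=
      ⟨hYE, hYdet, (lt_of_lt_of_le hrlt (min_le_right _ _)).le⟩
    have hXY : ‖X‖ ≤ ‖Y‖ := hmin hYK
    have := lt_of_lt_of_le hrlt (min_le_left _ _)
    linarith
  obtain ⟨w, hw0, hfix⟩ := (det_one_sub_iff _).mp hXdet
  set w' : E2 := (WithLp.equiv 2 (Fin 2 → ℂ)).symm w with hw'
  have hw'0 : w' ≠ 0 := by simpa [hw'] using hw0
  have hfix' : Matrix.toEuclideanLin (A * X) w' = w' := by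
    rw [hw', toEuclideanLin_apply_piLp_equiv_symm, hfix]
  rw [toEuclideanLin_mul_apply] at hfix'
  set y : E2 := Matrix.toEuclideanLin X w' with hy
  have happ : Matrix.toEuclideanLin A y = (inner ℂ v y : ℂ) • u := rk1_apply u v y
  set c : ℂ := (inner ℂ v y : ℂ) with hc
  have hwcu : w' = c • u := by rw [← hfix', happ]
  have hc0 : c ≠ 0 := by
    intro h0; rw [h0, zero_smul] at hwcu; exact hw'0 hwcu
  set z : E2 := Matrix.toEuclideanLin X u with hz
  have hyz : y = c • z := by rw [hy, hwcu, _root_.map_smul, hz]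
  have hinner : (inner ℂ v z : ℂ) = 1 := by
    have hcc : c = c * (inner ℂ v z : ℂ) := by
      conv_lhs => rw [hc, hyz, inner_smul_right]
    exact (mul_left_cancel₀ hc0 (by rw [mul_one, ← hcc])).symm
  have hz1 : ‖z‖ = 1 := by
    have hzle : ‖z‖ ≤ 1 := by
      calc ‖z‖ ≤ ‖X‖ * ‖u‖ := by rw [hz]; exact toEuclideanLin_le X u
        _ = 1 := by rw [hX1, hu, mul_one]
    have h1 : (1:ℝ) = ‖(inner ℂ v z : ℂ)‖ := by rw [hinner]; simp
    have h2 : ‖(inner ℂ v z : ℂ)‖ ≤ ‖v‖ * ‖z‖ := norm_inner_le_norm v z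
    rw [hv, one_mul] at h2
    linarith
  have hvz : v = z := (inner_eq_one_iff_of_norm_eq_one hv hz1).mp hinner
  exact ⟨X, hXE, by rw [opNorm_eq_norm, hX1], hvz.symm⟩

end Main

end Stmt17Aux

/-- Theorem 4.1: for a linear subspace E ⊆ M₂(ℂ), the following are equivalent:
(1) 𝔽 = 𝔽_{μ_E}; (2) μ_E(A) = ‖A‖ for all A; (3) for all unit vectors u, v ∈ ℂ² there is
A ∈ E with ‖A‖ = 1 and Au = v. -/
theorem stmt17 (E : Submodule ℂ (Matrix (Fin 2) (Fin 2) ℂ)) :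
    ((domF = Fmu (E : Set (Matrix (Fin 2) (Fin 2) ℂ))) ↔
      (∀ A : Matrix (Fin 2) (Fin 2) ℂ, mu (E : Set (Matrix (Fin 2) (Fin 2) ℂ)) A = opNorm A)) ∧
    ((∀ A : Matrix (Fin 2) (Fin 2) ℂ, mu (E : Set (Matrix (Fin 2) (Fin 2) ℂ)) A = opNorm A) ↔
      (∀ u v : EuclideanSpace ℂ (Fin 2), ‖u‖ = 1 → ‖v‖ = 1 →
        ∃ A ∈ E, opNorm A = 1 ∧ Matrix.toEuclideanLin A u = v)) :=
  ⟨⟨Stmt17Aux.P1_to_P2 E, Stmt17Aux.P2_to_P1 E⟩,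
    ⟨Stmt17Aux.P2_to_P3 E, Stmt17Aux.P3_to_P2 E⟩⟩
end

section
/- For every θ ∈ ℝ, the linear subspace E_θ ⊆ M₂(ℂ) satisfies 𝔽 = 𝔽_{μ_{E_θ}}. -/
/-- The structure E_θ = {[[z₁, w],[e^{iθ}w, z₂]] : z₁, z₂, w ∈ ℂ}. -/
def EthetaSet (θ : ℝ) : Set (Matrix (Fin 2) (Fin 2) ℂ) :=
  {M | ∃ z1 z2 w : ℂ, M = !![z1, w; Complex.exp (θ * Complex.I) * w, z2]}



open Matrix Complex

abbrev Euc := EuclideanSpace ℂ (Fin 2)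

noncomputable def mapE (A : Matrix (Fin 2) (Fin 2) ℂ) : Euc →L[ℂ] Euc :=
  LinearMap.toContinuousLinearMap (Matrix.toEuclideanLin A)

lemma mapE_coord (A : Matrix (Fin 2) (Fin 2) ℂ) (x : Euc) (i : Fin 2) :
    mapE A x i = A.mulVec x i := rfl

lemma opNorm_eq (A : Matrix (Fin 2) (Fin 2) ℂ) : opNorm A = ‖mapE A‖ := rfl

lemma mulVec_le (A : Matrix (Fin 2) (Fin 2) ℂ) (x : Euc) :
    ‖mapE A x‖ ≤ opNorm A * ‖x‖ := (mapE A).le_opNorm x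

lemma opNorm_le (A : Matrix (Fin 2) (Fin 2) ℂ) {c : ℝ} (hc : 0 ≤ c)
    (h : ∀ x : Euc, ‖mapE A x‖ ≤ c * ‖x‖) : opNorm A ≤ c :=
  ContinuousLinearMap.opNorm_le_bound _ hc h

lemma mapE_mul (A B : Matrix (Fin 2) (Fin 2) ℂ) (x : Euc) :
    mapE (A * B) x = mapE A (mapE B x) := by
  ext i
  simp only [mapE_coord]
  rw [← Matrix.mulVec_mulVec]
  rfl

lemma mapE_smul (c : ℂ) (A : Matrix (Fin 2) (Fin 2) ℂ) (x : Euc) :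
    mapE (c • A) x = c • mapE A x := by
  ext i
  simp only [mapE_coord, PiLp.smul_apply, smul_eq_mul]
  rw [Matrix.smul_mulVec]
  rfl

lemma opNorm_pos (A : Matrix (Fin 2) (Fin 2) ℂ) (hA : A ≠ 0) : 0 < opNorm A := by
  rcases lt_or_eq_of_le (norm_nonneg (mapE A)) with h | h
  · exact h
  exfalso; apply hA
  ext i j
  have hx : ∀ x : Euc, mapE A x = 0 := by
    intro x
    have := mulVec_le A x
    rw [opNorm_eq, ← h, zero_mul] at this
    simpa using le_antisymm this (norm_nonneg _)
  have h0 : A.mulVec (EuclideanSpace.single j 1) i = 0 := by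
    rw [← mapE_coord, hx]; rfl
  simpa [Matrix.mulVec, dotProduct, EuclideanSpace.single_apply,
    Finset.sum_ite_eq, Finset.sum_ite_eq'] using h0

-- eigen lemma
lemma det_one_sub_iff (M : Matrix (Fin 2) (Fin 2) ℂ) :
    (1 - M).det = 0 ↔ ∃ v ≠ 0, M.mulVec v = v := by
  rw [← Matrix.exists_mulVec_eq_zero_iff]
  constructor
  · rintro ⟨v, hv, h⟩
    refine ⟨v, hv, ?_⟩
    rw [Matrix.sub_mulVec, Matrix.one_mulVec, sub_eq_zero] at h
    exact h.symm
  · rintro ⟨v, hv, h⟩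
    refine ⟨v, hv, ?_⟩
    rw [Matrix.sub_mulVec, Matrix.one_mulVec, sub_eq_zero, h]

lemma exists_attain (A : Matrix (Fin 2) (Fin 2) ℂ) :
    ∃ v : Euc, ‖v‖ = 1 ∧ ‖mapE A v‖ = opNorm A := by
  have hne : (Metric.sphere (0:Euc) 1).Nonempty := by
    refine ⟨EuclideanSpace.single 0 1, ?_⟩
    simp [mem_sphere_zero_iff_norm, EuclideanSpace.norm_single]
  have hcomp : IsCompact (Metric.sphere (0:Euc) 1) := isCompact_sphere 0 1
  have hcont : ContinuousOn (fun x : Euc => ‖mapE A x‖) (Metric.sphere 0 1) :=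
    ((mapE A).continuous.norm).continuousOn
  obtain ⟨v, hv, hmax⟩ := hcomp.exists_isMaxOn hne hcont
  have hv1 : ‖v‖ = 1 := mem_sphere_zero_iff_norm.mp hv
  refine ⟨v, hv1, le_antisymm ?_ ?_⟩
  · simpa [opNorm_eq, hv1] using mulVec_le A v
  · refine opNorm_le A (norm_nonneg _) (fun x => ?_)
    rcases eq_or_ne x 0 with rfl | hx
    · simp
    · have hxn : ‖x‖ ≠ 0 := norm_ne_zero_iff.mpr hx
      have hy : ((‖x‖⁻¹ : ℂ) • x : Euc) ∈ Metric.sphere (0:Euc) 1 := by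
        simp [mem_sphere_zero_iff_norm, norm_smul, inv_mul_cancel₀ hxn]
      have hle := hmax hy
      simp only [Set.mem_setOf_eq] at hle
      rw [(mapE A).map_smul, norm_smul, norm_inv, Complex.norm_real, Real.norm_eq_abs,
        _root_.abs_of_nonneg (norm_nonneg _)] at hle
      calc ‖mapE A x‖ = ‖x‖ * (‖x‖⁻¹ * ‖mapE A x‖) := by field_simp
        _ ≤ ‖x‖ * ‖mapE A v‖ := mul_le_mul_of_nonneg_left hle (norm_nonneg _)
        _ = ‖mapE A v‖ * ‖x‖ := mul_comm _ _

lemma solve (c d k : ℂ) :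
    ∃ (a : ℂ) (t : ℝ), Complex.normSq a + t^2 = 1 ∧
      a * c - (starRingEnd ℂ) a * d + (t : ℂ) * k = 0 := by
  rcases eq_or_ne k 0 with hk | hk
  · exact ⟨0, 1, by simp, by simp [hk]⟩
  · set f : ℝ → ℝ := fun α =>
      ((Complex.exp (-(α:ℂ) * Complex.I) * d - Complex.exp ((α:ℂ) * Complex.I) * c) / k).im with hf
    have hcont : Continuous f := by fun_prop
    have hfπ : f Real.pi = - f 0 := by
      simp only [hf]
      rw [show (-(Real.pi:ℂ)) * Complex.I = -(Real.pi * Complex.I) by ring, Complex.exp_neg,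
        Complex.exp_pi_mul_I]
      simp only [Complex.ofReal_zero, zero_mul, neg_zero, Complex.exp_zero]
      rw [show ((-1:ℂ))⁻¹ = -1 by norm_num]
      rw [show ((-1:ℂ) * d - -1 * c) / k = -((1 * d - 1 * c)/k) by ring]
      simp
    have hIVT : ∃ α ∈ Set.Icc (0:ℝ) Real.pi, f α = 0 := by
      rcases le_total (f 0) 0 with h | h
      · have : (0:ℝ) ∈ Set.Icc (f 0) (f Real.pi) := ⟨h, by rw [hfπ]; linarith⟩
        obtain ⟨α, hα, hfα⟩ := intermediate_value_Icc Real.pi_pos.le hcont.continuousOn this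
        exact ⟨α, hα, hfα⟩
      · have : (0:ℝ) ∈ Set.Icc (f Real.pi) (f 0) := ⟨by rw [hfπ]; linarith, h⟩
        obtain ⟨α, hα, hfα⟩ := intermediate_value_Icc' Real.pi_pos.le hcont.continuousOn this
        exact ⟨α, hα, hfα⟩
    obtain ⟨α, -, hα⟩ := hIVT
    set g : ℂ := (Complex.exp (-(α:ℂ) * Complex.I) * d - Complex.exp ((α:ℂ) * Complex.I) * c) / k with hgdef
    set ρ : ℝ := g.re with hρ
    have him : g.im = 0 := by rw [hgdef]; simpa [hf] using hα
    have hg : g = (ρ : ℂ) := Complex.ext (by simp [hρ]) (by simp [him])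
    have hgk : Complex.exp (-(α:ℂ) * Complex.I) * d - Complex.exp ((α:ℂ) * Complex.I) * c
        = (ρ : ℂ) * k := by
      rw [← hg, hgdef, div_mul_cancel₀ _ hk]
    have h1ρ : (0:ℝ) < 1 + ρ^2 := by positivity
    set s : ℝ := (Real.sqrt (1 + ρ^2))⁻¹ with hs
    have hsq : Real.sqrt (1 + ρ^2) ^ 2 = 1 + ρ^2 := Real.sq_sqrt h1ρ.le
    have hsqrt_pos : 0 < Real.sqrt (1 + ρ^2) := Real.sqrt_pos.mpr h1ρ
    refine ⟨(s:ℂ) * Complex.exp ((α:ℂ) * Complex.I), s * ρ, ?_, ?_⟩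
    · have habs : Complex.normSq (Complex.exp ((α:ℂ) * Complex.I)) = 1 := by
        rw [← Complex.sq_norm, Complex.norm_exp]
        simp
      rw [Complex.normSq_mul, Complex.normSq_ofReal, habs, mul_one, mul_pow]
      have h2 : s ^ 2 = (1 + ρ^2)⁻¹ := by
        rw [hs, inv_pow, hsq]
      have h3 : s ^ 2 * (1 + ρ^2) = 1 := by
        rw [h2]; field_simp
      linear_combination h3
    · have hconj : (starRingEnd ℂ) ((s:ℂ) * Complex.exp ((α:ℂ) * Complex.I))
          = (s:ℂ) * Complex.exp (-(α:ℂ) * Complex.I) := by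
        rw [_root_.map_mul, Complex.conj_ofReal, ← Complex.exp_conj]
        congr 1
        rw [_root_.map_mul, Complex.conj_ofReal, Complex.conj_I]
        ring
      rw [hconj]
      push_cast
      linear_combination (-(s:ℂ)) * hgk

lemma unitary_isom (a w : ℂ) (h1 : a * (starRingEnd ℂ) a + w * (starRingEnd ℂ) w = 1)
    (x : Euc) : ‖mapE !![a, w; -(starRingEnd ℂ) w, (starRingEnd ℂ) a] x‖ = ‖x‖ := by
  rw [EuclideanSpace.norm_eq, EuclideanSpace.norm_eq]
  congr 1
  have e0 : mapE !![a, w; -(starRingEnd ℂ) w, (starRingEnd ℂ) a] x 0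
      = a * x 0 + w * x 1 := by
    rw [mapE_coord]
    simp [Matrix.mulVec, dotProduct, Fin.sum_univ_two, Matrix.vecHead, Matrix.vecTail]
  have e1 : mapE !![a, w; -(starRingEnd ℂ) w, (starRingEnd ℂ) a] x 1
      = -(starRingEnd ℂ) w * x 0 + (starRingEnd ℂ) a * x 1 := by
    rw [mapE_coord]
    simp [Matrix.mulVec, dotProduct, Fin.sum_univ_two, Matrix.vecHead, Matrix.vecTail]
  rw [Fin.sum_univ_two, Fin.sum_univ_two, e0, e1]
  have key : ((Complex.normSq (a * x 0 + w * x 1) : ℂ)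
      + (Complex.normSq (-(starRingEnd ℂ) w * x 0 + (starRingEnd ℂ) a * x 1) : ℂ))
      = (Complex.normSq (x 0) : ℂ) + (Complex.normSq (x 1) : ℂ) := by
    rw [← Complex.mul_conj, ← Complex.mul_conj, ← Complex.mul_conj, ← Complex.mul_conj]
    simp only [_root_.map_add, _root_.map_mul, _root_.map_neg, Complex.conj_conj]
    linear_combination (x 0 * (starRingEnd ℂ) (x 0) + x 1 * (starRingEnd ℂ) (x 1)) * h1
  have keyR : Complex.normSq (a * x 0 + w * x 1)
      + Complex.normSq (-(starRingEnd ℂ) w * x 0 + (starRingEnd ℂ) a * x 1)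
      = Complex.normSq (x 0) + Complex.normSq (x 1) := by exact_mod_cast key
  simp only [Complex.sq_norm]
  exact keyR

lemma cross_lemma (p0 p1 v0 v1 : ℂ) (h : p0 * v1 - p1 * v0 = 0)
    (hv : ¬(v0 = 0 ∧ v1 = 0)) : ∃ lam : ℂ, p0 = lam * v0 ∧ p1 = lam * v1 := by
  by_cases h0 : v0 = 0
  · have h1 : v1 ≠ 0 := fun h1 => hv ⟨h0, h1⟩
    subst h0
    have hp0 : p0 * v1 = 0 := by linear_combination h
    have hp0' : p0 = 0 := (mul_eq_zero.mp hp0).resolve_right h1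
    exact ⟨p1 / v1, by simp [hp0'], by field_simp⟩
  · refine ⟨p0 / v0, by field_simp, ?_⟩
    rw [div_mul_eq_mul_div, eq_div_iff h0]
    linear_combination -h

lemma exists_X (θ : ℝ) (A : Matrix (Fin 2) (Fin 2) ℂ) (hA : A ≠ 0) :
    ∃ X ∈ EthetaSet θ, (1 - A * X).det = 0 ∧ opNorm X ≤ (opNorm A)⁻¹ := by
  have hσ : 0 < opNorm A := opNorm_pos A hA
  set σ : ℝ := opNorm A with hσdef
  obtain ⟨v, hv1, hAv⟩ := exists_attain A
  set u : Euc := ((σ : ℂ))⁻¹ • mapE A v with hu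
  have hσC : (σ : ℂ) ≠ 0 := by exact_mod_cast hσ.ne'
  have hu1 : ‖u‖ = 1 := by
    rw [hu, norm_smul, norm_inv, Complex.norm_real, Real.norm_eq_abs,
      _root_.abs_of_nonneg hσ.le, hAv, inv_mul_cancel₀ hσ.ne']
  -- the phase η
  set η : ℂ := Complex.I * Complex.exp (-(θ / 2 : ℝ) * Complex.I) with hηdef
  have hηc : Complex.exp ((θ : ℂ) * Complex.I) * η = -(starRingEnd ℂ) η := by
    rw [hηdef, _root_.map_mul, Complex.conj_I, ← Complex.exp_conj]
    have h1 : (starRingEnd ℂ) (-(θ / 2 : ℝ) * Complex.I) = ((θ / 2 : ℝ) : ℂ) * Complex.I := by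
      rw [_root_.map_mul, _root_.map_neg, Complex.conj_ofReal, Complex.conj_I]
      ring
    rw [h1]
    have h2 : (θ : ℂ) * Complex.I + (-(θ / 2 : ℝ) : ℂ) * Complex.I
        = ((θ / 2 : ℝ) : ℂ) * Complex.I := by push_cast; ring
    calc Complex.exp ((θ : ℂ) * Complex.I) * (Complex.I * Complex.exp (-(θ / 2 : ℝ) * Complex.I))
        = Complex.I * (Complex.exp ((θ : ℂ) * Complex.I)
            * Complex.exp ((-(θ / 2 : ℝ) : ℂ) * Complex.I)) := by push_cast; ring
      _ = Complex.I * Complex.exp ((θ : ℂ) * Complex.I + (-(θ / 2 : ℝ) : ℂ) * Complex.I) := by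
            rw [Complex.exp_add]
      _ = Complex.I * Complex.exp (((θ / 2 : ℝ) : ℂ) * Complex.I) := by rw [h2]
      _ = -(- Complex.I * Complex.exp (((θ / 2 : ℝ) : ℂ) * Complex.I)) := by ring
  have hη1 : η * (starRingEnd ℂ) η = 1 := by
    rw [Complex.mul_conj]
    have : Complex.normSq η = 1 := by
      rw [hηdef, Complex.normSq_mul, Complex.normSq_I, one_mul, ← Complex.sq_norm,
        Complex.norm_exp]
      simp
    rw [this]; norm_num
  -- solve for a, t
  obtain ⟨a, t, hnorm, heq⟩ := solve (u 0 * v 1) (u 1 * v 0)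
    (η * (u 1 * v 1) + (starRingEnd ℂ) η * (u 0 * v 0))
  set w : ℂ := (t : ℂ) * η with hwdef
  have hcw : (starRingEnd ℂ) w = (t : ℂ) * (starRingEnd ℂ) η := by
    rw [hwdef, _root_.map_mul, Complex.conj_ofReal]
  have h1 : a * (starRingEnd ℂ) a + w * (starRingEnd ℂ) w = 1 := by
    have hna : a * (starRingEnd ℂ) a = (Complex.normSq a : ℂ) := Complex.mul_conj a
    have hnw : w * (starRingEnd ℂ) w = ((t : ℂ)) ^ 2 := by
      rw [hcw]; linear_combination ((t:ℂ))^2 * hη1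
    rw [hna, hnw]
    have : ((Complex.normSq a + t ^ 2 : ℝ) : ℂ) = 1 := by rw [hnorm]; norm_num
    push_cast at this
    exact this
  set Y : Matrix (Fin 2) (Fin 2) ℂ := !![a, w; -(starRingEnd ℂ) w, (starRingEnd ℂ) a] with hY
  have hiso := unitary_isom a w h1
  have pY0 : mapE Y u 0 = a * u 0 + w * u 1 := by
    rw [mapE_coord]
    simp [hY, Matrix.mulVec, dotProduct, Fin.sum_univ_two, Matrix.vecHead, Matrix.vecTail]
  have pY1 : mapE Y u 1 = -(starRingEnd ℂ) w * u 0 + (starRingEnd ℂ) a * u 1 := by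
    rw [mapE_coord]
    simp [hY, Matrix.mulVec, dotProduct, Fin.sum_univ_two, Matrix.vecHead, Matrix.vecTail]
  have hvne : ¬(v 0 = 0 ∧ v 1 = 0) := by
    rintro ⟨hz0, hz1⟩
    have hv0 : v = 0 := by
      ext i; fin_cases i
      · exact hz0
      · exact hz1
    rw [hv0] at hv1; simp at hv1
  have hcross : mapE Y u 0 * v 1 - mapE Y u 1 * v 0 = 0 := by
    rw [pY0, pY1, hcw]
    linear_combination heq
  obtain ⟨lam, hl0, hl1⟩ := cross_lemma _ _ _ _ hcross hvne
  have hYu : mapE Y u = lam • v := by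
    ext i; fin_cases i
    · simpa using hl0
    · simpa using hl1
  have hlam : ‖lam‖ = 1 := by
    have h2 : ‖mapE Y u‖ = 1 := by rw [hiso u, hu1]
    rw [hYu, norm_smul, hv1, mul_one] at h2
    exact h2
  set μc : ℂ := (σ : ℂ)⁻¹ * (starRingEnd ℂ) lam with hμc
  set X : Matrix (Fin 2) (Fin 2) ℂ := μc • Y with hX
  have hYw : Complex.exp ((θ : ℂ) * Complex.I) * w = -(starRingEnd ℂ) w := by
    rw [hcw, hwdef]
    linear_combination (t : ℂ) * hηc
  refine ⟨X, ⟨μc * a, μc * (starRingEnd ℂ) a, μc * w, ?_⟩, ?_, ?_⟩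
  · ext i j
    fin_cases i <;> fin_cases j
    · simp [hX, hY]
    · simp [hX, hY]
    · simp [hX, hY]
      linear_combination -μc * hYw
    · simp [hX, hY]
  · have hconjmul : (starRingEnd ℂ) lam * lam = 1 := by
      rw [mul_comm, Complex.mul_conj]
      have : Complex.normSq lam = 1 := by
        rw [← Complex.sq_norm, hlam, one_pow]
      rw [this]; norm_num
    have hXu : mapE X u = (σ : ℂ)⁻¹ • v := by
      rw [hX, mapE_smul, hYu, smul_smul, hμc]
      congr 1
      rw [mul_assoc, hconjmul, mul_one]
    have hfix : mapE (A * X) u = u := by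
      rw [mapE_mul _ _ u, hXu, (mapE A).map_smul, hu]
    refine (det_one_sub_iff _).mpr ⟨u, ?_, ?_⟩
    · intro h
      have : ‖u‖ = 0 := by rw [show u = 0 from by ext i; exact congrFun h i]; simp
      rw [hu1] at this; norm_num at this
    · funext i
      rw [← mapE_coord, hfix]
  · refine opNorm_le X (inv_nonneg.mpr hσ.le) (fun x => ?_)
    rw [hX, mapE_smul, norm_smul, hiso x]
    have hμn : ‖μc‖ = σ⁻¹ := by
      rw [hμc, norm_mul, norm_inv, Complex.norm_real, Real.norm_eq_abs,
        _root_.abs_of_nonneg hσ.le, RCLike.norm_conj, hlam, mul_one]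
    rw [hμn]

lemma mu_eq (θ : ℝ) (A : Matrix (Fin 2) (Fin 2) ℂ) : mu (EthetaSet θ) A = opNorm A := by
  rcases eq_or_ne A 0 with rfl | hA
  · have hnex : ¬ ∃ X ∈ EthetaSet θ, ((1 : Matrix (Fin 2) (Fin 2) ℂ) - 0 * X).det = 0 := by
      rintro ⟨X, -, h⟩
      rw [zero_mul, sub_zero, Matrix.det_one] at h
      exact one_ne_zero h
    rw [mu, if_neg hnex]
    have h0 : mapE (0 : Matrix (Fin 2) (Fin 2) ℂ) = 0 := by
      ext x i
      simp [mapE_coord]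
    rw [opNorm_eq, h0, norm_zero]
  · obtain ⟨X₀, hX₀mem, hX₀det, hX₀n⟩ := exists_X θ A hA
    have hσ : 0 < opNorm A := opNorm_pos A hA
    have hex : ∃ X ∈ EthetaSet θ, (1 - A * X).det = 0 := ⟨X₀, hX₀mem, hX₀det⟩
    rw [mu, if_pos hex]
    have hlb : ∀ r ∈ {r : ℝ | ∃ X ∈ EthetaSet θ, (1 - A * X).det = 0 ∧ r = opNorm X},
        (opNorm A)⁻¹ ≤ r := by
      rintro r ⟨X, hXm, hXd, rfl⟩
      obtain ⟨x, hx0, hxe⟩ := (det_one_sub_iff _).mp hXd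
      set xE : Euc := (WithLp.equiv 2 (Fin 2 → ℂ)).symm x with hxE
      have hfix : mapE (A * X) xE = xE := by
        ext i
        rw [mapE_coord]
        exact congrFun hxe i
      have hxEn : 0 < ‖xE‖ := by
        rw [norm_pos_iff]
        intro h
        exact hx0 (by ext i; exact congrFun (congrArg (WithLp.equiv 2 (Fin 2 → ℂ)) h) i)
      have hchain : ‖xE‖ ≤ opNorm A * (opNorm X * ‖xE‖) := by
        calc ‖xE‖ = ‖mapE (A * X) xE‖ := by rw [hfix]
          _ = ‖mapE A (mapE X xE)‖ := by rw [mapE_mul]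
          _ ≤ opNorm A * ‖mapE X xE‖ := mulVec_le A _
          _ ≤ opNorm A * (opNorm X * ‖xE‖) :=
              mul_le_mul_of_nonneg_left (mulVec_le X xE) hσ.le
      have hone : 1 ≤ opNorm A * opNorm X := by
        nlinarith [hxEn]
      have hinv : opNorm A * (opNorm A)⁻¹ = 1 := mul_inv_cancel₀ hσ.ne'
      nlinarith [hinv, hσ]
    have hmem : opNorm X₀ ∈ {r : ℝ | ∃ X ∈ EthetaSet θ, (1 - A * X).det = 0 ∧ r = opNorm X} :=
      ⟨X₀, hX₀mem, hX₀det, rfl⟩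
    have h1 : sInf {r : ℝ | ∃ X ∈ EthetaSet θ, (1 - A * X).det = 0 ∧ r = opNorm X}
        = (opNorm A)⁻¹ :=
      le_antisymm ((csInf_le ⟨_, hlb⟩ hmem).trans hX₀n) (le_csInf ⟨_, hmem⟩ hlb)
    rw [h1, inv_inv]

/-- Corollary 4.2: for every θ ∈ ℝ, 𝔽 = 𝔽_{μ_{E_θ}}. -/
theorem stmt18 (θ : ℝ) : domF = Fmu (EthetaSet θ) := by
  ext p
  simp only [domF, Fmu, Set.mem_setOf_eq, mu_eq]
end

section
/- Let E be a proper linear subspace of M₂(ℂ) that contains all diagonal 2×2 complex matrices. Then 𝔽_{μ_E} = 𝔽 if and only if E = E_θ for some θ ∈ ℝ. -/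
/-! ### Auxiliary lemmas -/

noncomputable def Complex.abs : AbsoluteValue ℂ ℝ := NormedField.toAbsoluteValue ℂ

noncomputable def ev (x : Fin 2 → ℂ) : EuclideanSpace ℂ (Fin 2) :=
  (WithLp.equiv 2 (Fin 2 → ℂ)).symm x

lemma ev_norm (x : Fin 2 → ℂ) :
    ‖ev x‖ = Real.sqrt (Complex.normSq (x 0) + Complex.normSq (x 1)) := by
  rw [EuclideanSpace.norm_eq]
  congr 1
  rw [Fin.sum_univ_two]
  simp [ev, ← Complex.sq_norm]

lemma opNorm_nonneg (A : Matrix (Fin 2) (Fin 2) ℂ) : 0 ≤ opNorm A := norm_nonneg _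

lemma norm_mulVec_le (A : Matrix (Fin 2) (Fin 2) ℂ) (x : Fin 2 → ℂ) :
    ‖ev (A.mulVec x)‖ ≤ opNorm A * ‖ev x‖ := by
  have h := (LinearMap.toContinuousLinearMap (Matrix.toEuclideanLin A)).le_opNorm (ev x)
  simpa [ev, opNorm, Matrix.toEuclideanLin_apply_piLp_toLp] using h

lemma opNorm_le_bound (A : Matrix (Fin 2) (Fin 2) ℂ) {c : ℝ} (hc : 0 ≤ c)
    (h : ∀ x : Fin 2 → ℂ, ‖ev (A.mulVec x)‖ ≤ c * ‖ev x‖) : opNorm A ≤ c := by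
  apply ContinuousLinearMap.opNorm_le_bound _ hc
  intro x
  have := h ((WithLp.equiv 2 (Fin 2 → ℂ)) x)
  simpa [ev, Matrix.toEuclideanLin_apply] using this

lemma abs_entry_le_opNorm (A : Matrix (Fin 2) (Fin 2) ℂ) (i j : Fin 2) :
    Complex.abs (A i j) ≤ opNorm A := by
  have h := norm_mulVec_le A (Pi.single j 1)
  have hx : ‖ev (Pi.single j (1:ℂ))‖ = 1 := by
    rw [ev_norm]
    fin_cases j <;> simp
  rw [hx, mul_one] at h
  refine le_trans ?_ h
  rw [ev_norm]
  have hcol : ∀ i', A.mulVec (Pi.single j 1) i' = A i' j := by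
    intro i'
    simp [Matrix.mulVec_single]
  rw [hcol 0, hcol 1]
  have h1 : Complex.abs (A i j) = Real.sqrt (Complex.normSq (A i j)) := by
    rw [show Complex.abs (A i j) = ‖A i j‖ from rfl, Complex.norm_def]
  rw [h1]
  apply Real.sqrt_le_sqrt
  have hi : i = 0 ∨ i = 1 := by fin_cases i <;> [exact Or.inl rfl; exact Or.inr rfl]
  rcases hi with rfl | rfl
  · nlinarith [Complex.normSq_nonneg (A 1 j)]
  · nlinarith [Complex.normSq_nonneg (A 0 j)]

lemma one_le_opNorm_mul {A X : Matrix (Fin 2) (Fin 2) ℂ} (h : (1 - A * X).det = 0) :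
    1 ≤ opNorm A * opNorm X := by
  obtain ⟨ξ, hξ0, hker⟩ := (Matrix.exists_mulVec_eq_zero_iff).mpr h
  have hξ : ξ = A.mulVec (X.mulVec ξ) := by
    have := hker
    rw [Matrix.sub_mulVec, Matrix.one_mulVec, sub_eq_zero] at this
    rw [Matrix.mulVec_mulVec]; exact this
  have h1 : ‖ev ξ‖ ≤ opNorm A * (opNorm X * ‖ev ξ‖) := by
    calc ‖ev ξ‖ = ‖ev (A.mulVec (X.mulVec ξ))‖ := by rw [← hξ]
    _ ≤ opNorm A * ‖ev (X.mulVec ξ)‖ := norm_mulVec_le _ _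
    _ ≤ opNorm A * (opNorm X * ‖ev ξ‖) :=
        mul_le_mul_of_nonneg_left (norm_mulVec_le _ _) (opNorm_nonneg _)
  have hpos : 0 < ‖ev ξ‖ := by
    rw [norm_pos_iff]
    intro hc
    apply hξ0
    have : (WithLp.equiv 2 (Fin 2 → ℂ)) (ev ξ) = (WithLp.equiv 2 (Fin 2 → ℂ)) 0 := by rw [hc]
    simpa [ev] using this
  nlinarith

lemma mu_lt_one_of_opNorm_lt_one (E : Set (Matrix (Fin 2) (Fin 2) ℂ))
    (A : Matrix (Fin 2) (Fin 2) ℂ) (hA : opNorm A < 1) : mu E A < 1 := by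
  unfold mu
  split_ifs with h
  · obtain ⟨X0, hX0E, hX0⟩ := h
    have hA1 : 1 ≤ opNorm A * opNorm X0 := one_le_opNorm_mul hX0
    have hApos : 0 < opNorm A := by
      rcases lt_or_ge 0 (opNorm A) with h' | h'
      · exact h'
      · nlinarith [opNorm_nonneg X0]
    set S := {r : ℝ | ∃ X ∈ E, (1 - A * X).det = 0 ∧ r = opNorm X} with hS
    have hSne : S.Nonempty := ⟨opNorm X0, X0, hX0E, hX0, rfl⟩
    have hlb : ∀ r ∈ S, (opNorm A)⁻¹ ≤ r := by
      rintro r ⟨X, hXE, hXdet, rfl⟩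
      have := one_le_opNorm_mul hXdet
      rw [inv_le_iff_one_le_mul₀ hApos]
      linarith
    have hInf : (opNorm A)⁻¹ ≤ sInf S := le_csInf hSne hlb
    have hInvpos : 0 < (opNorm A)⁻¹ := by positivity
    calc (sInf S)⁻¹ ≤ ((opNorm A)⁻¹)⁻¹ := by
          apply inv_anti₀ hInvpos hInf
    _ = opNorm A := inv_inv _
    _ < 1 := hA
  · norm_num

local notation "conj" => starRingEnd ℂ

lemma exists_Etheta_contraction (θ : ℝ) (a b : Fin 2 → ℂ) (ha : a ≠ 0) :
    ∃ X ∈ EthetaSet θ, X.mulVec a = b ∧ opNorm X * ‖ev a‖ ≤ ‖ev b‖ := by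
  set e : ℂ := Complex.exp (θ * Complex.I) with he_def
  have he : e * conj e = 1 := by
    rw [he_def, ← Complex.exp_conj, ← Complex.exp_add, map_mul, Complex.conj_ofReal,
      Complex.conj_I]
    have : (θ:ℂ) * Complex.I + (θ:ℂ) * -Complex.I = 0 := by ring
    rw [this, Complex.exp_zero]
  by_cases hb : b = 0
  · refine ⟨0, ⟨0, 0, 0, by ext i j; fin_cases i <;> fin_cases j <;> simp⟩, ?_, ?_⟩
    · rw [Matrix.zero_mulVec, hb]
    · have h0 : opNorm 0 = 0 := by
        unfold opNorm
        rw [map_zero, map_zero, norm_zero]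
      rw [h0, zero_mul]
      positivity
  · set α : ℝ := ‖ev a‖ with hα_def
    set β : ℝ := ‖ev b‖ with hβ_def
    have hα : 0 < α := by
      rw [hα_def, norm_pos_iff]
      intro hc
      apply ha
      have : (WithLp.equiv 2 (Fin 2 → ℂ)) (ev a) = (WithLp.equiv 2 (Fin 2 → ℂ)) 0 := by rw [hc]
      simpa [ev] using this
    have hβ : 0 < β := by
      rw [hβ_def, norm_pos_iff]
      intro hc
      apply hb
      have : (WithLp.equiv 2 (Fin 2 → ℂ)) (ev b) = (WithLp.equiv 2 (Fin 2 → ℂ)) 0 := by rw [hc]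
      simpa [ev] using this
    have hα2 : (α:ℝ)^2 = Complex.normSq (a 0) + Complex.normSq (a 1) := by
      rw [hα_def, ev_norm]
      exact Real.sq_sqrt (add_nonneg (Complex.normSq_nonneg _) (Complex.normSq_nonneg _))
    have hβ2 : (β:ℝ)^2 = Complex.normSq (b 0) + Complex.normSq (b 1) := by
      rw [hβ_def, ev_norm]
      exact Real.sq_sqrt (add_nonneg (Complex.normSq_nonneg _) (Complex.normSq_nonneg _))
    have hαC : (α : ℂ) ≠ 0 := by exact_mod_cast hα.ne'
    have hβC : (β : ℂ) ≠ 0 := by exact_mod_cast hβ.ne'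
    set u1 : ℂ := a 0 / α with hu1
    set u2 : ℂ := a 1 / α with hu2
    set v1 : ℂ := b 0 / β with hv1
    set v2 : ℂ := b 1 / β with hv2
    have hconj_a : ∀ z : ℂ, z * conj z = (Complex.normSq z : ℂ) := fun z => Complex.mul_conj z
    have hcast_a : ((Complex.normSq (a 0)):ℂ) + ((Complex.normSq (a 1)):ℂ) = (α:ℂ) * α := by
      exact_mod_cast (by linear_combination -hα2 :
        Complex.normSq (a 0) + Complex.normSq (a 1) = α * α)
    have hcast_b : ((Complex.normSq (b 0)):ℂ) + ((Complex.normSq (b 1)):ℂ) = (β:ℂ) * β := by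
      exact_mod_cast (by linear_combination -hβ2 :
        Complex.normSq (b 0) + Complex.normSq (b 1) = β * β)
    have hu : u1 * conj u1 + u2 * conj u2 = 1 := by
      rw [hu1, hu2, map_div₀, map_div₀, Complex.conj_ofReal]
      rw [div_mul_div_comm, div_mul_div_comm, ← add_div, hconj_a, hconj_a]
      rw [div_eq_one_iff_eq (mul_ne_zero hαC hαC)]
      exact hcast_a
    have hv : v1 * conj v1 + v2 * conj v2 = 1 := by
      rw [hv1, hv2, map_div₀, map_div₀, Complex.conj_ofReal]
      rw [div_mul_div_comm, div_mul_div_comm, ← add_div, hconj_a, hconj_a]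
      rw [div_eq_one_iff_eq (mul_ne_zero hβC hβC)]
      exact hcast_b
    set z : ℂ := e * conj v2 * u1 - conj v1 * u2 with hz_def
    set μ : ℂ := if z = 0 then 1 else -e * conj z / z with hμ_def
    have hm : μ * conj μ = 1 := by
      rw [hμ_def]
      split_ifs with h0
      · simp
      · have hzc : conj z ≠ 0 := by simpa using h0
        rw [map_div₀]
        simp only [map_mul, map_neg, Complex.conj_conj]
        rw [div_mul_div_comm, div_eq_one_iff_eq (mul_ne_zero h0 hzc)]
        linear_combination (z * conj z) * he
    have hμz : μ * z = -e * conj z := by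
      rw [hμ_def]
      split_ifs with h0
      · rw [h0]; simp
      · field_simp
    have hμz' : μ * (e * conj v2 * u1 - conj v1 * u2)
        = -e * (conj e * v2 * conj u1 - v1 * conj u2) := by
      have h1 := hμz
      rw [hz_def] at h1
      simp only [map_sub, map_mul, Complex.conj_conj] at h1
      linear_combination h1
    set W00 : ℂ := v1 * conj u1 + μ * conj v2 * u2 with hW00
    set W01 : ℂ := v1 * conj u2 - μ * conj v2 * u1 with hW01
    set W10 : ℂ := v2 * conj u1 - μ * conj v1 * u2 with hW10
    set W11 : ℂ := v2 * conj u2 + μ * conj v1 * u1 with hW11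
    have hW10e : W10 = e * W01 := by
      rw [hW10, hW01]
      linear_combination hμz' - (v2 * conj u1) * he
    have hiso : ∀ x1 x2 : ℂ,
        (W00*x1 + W01*x2) * conj (W00*x1 + W01*x2)
          + (W10*x1 + W11*x2) * conj (W10*x1 + W11*x2)
        = x1 * conj x1 + x2 * conj x2 := by
      intro x1 x2
      simp only [hW00, hW01, hW10, hW11, map_add, map_sub, map_mul, Complex.conj_conj]
      linear_combination
        ((x1 * conj x1 + x2 * conj x2) * (v1 * conj v1 + v2 * conj v2)) * hu
        + (x1 * conj x1 + x2 * conj x2) * hv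
        + ((v1 * conj v1 + v2 * conj v2)
            * ((-u2*x1 + u1*x2) * (-(conj u2)*(conj x1) + (conj u1)*(conj x2)))) * hm
    have hWu0 : W00 * u1 + W01 * u2 = v1 := by
      rw [hW00, hW01]
      linear_combination v1 * hu
    have hWu1 : W10 * u1 + W11 * u2 = v2 := by
      rw [hW10, hW11]
      linear_combination v2 * hu
    set c : ℂ := ((β / α : ℝ) : ℂ) with hc_def
    set X : Matrix (Fin 2) (Fin 2) ℂ := !![c * W00, c * W01; c * W10, c * W11] with hX_def
    refine ⟨X, ⟨c * W00, c * W11, c * W01, ?_⟩, ?_, ?_⟩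
    · rw [hX_def]
      congr 1
      rw [hW10e, he_def]; ring
    · funext i
      have ha0 : a 0 = (α:ℂ) * u1 := by rw [hu1]; field_simp
      have ha1 : a 1 = (α:ℂ) * u2 := by rw [hu2]; field_simp
      have hb0 : b 0 = (β:ℂ) * v1 := by rw [hv1]; field_simp
      have hb1 : b 1 = (β:ℂ) * v2 := by rw [hv2]; field_simp
      have hcα : c * α = β := by rw [hc_def]; push_cast; field_simp
      fin_cases i
      · show X.mulVec a 0 = b 0
        rw [Matrix.mulVec, hX_def]
        show (dotProduct ![c * W00, c * W01] a) = b 0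
        rw [dotProduct]
        rw [Fin.sum_univ_two]
        show c * W00 * a 0 + c * W01 * a 1 = b 0
        rw [ha0, ha1, hb0]
        linear_combination ((c:ℂ) * (α:ℂ)) * hWu0 + v1 * hcα
      · show X.mulVec a 1 = b 1
        rw [Matrix.mulVec, hX_def]
        show (dotProduct ![c * W10, c * W11] a) = b 1
        rw [dotProduct]
        rw [Fin.sum_univ_two]
        show c * W10 * a 0 + c * W11 * a 1 = b 1
        rw [ha0, ha1, hb1]
        linear_combination ((c:ℂ) * (α:ℂ)) * hWu1 + v2 * hcα
    · have hXle : opNorm X ≤ β / α := by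
        apply opNorm_le_bound _ (by positivity)
        intro x
        have hXx0 : X.mulVec x 0 = c * (W00 * x 0 + W01 * x 1) := by
          rw [hX_def]
          show dotProduct ![c * W00, c * W01] x = _
          rw [dotProduct, Fin.sum_univ_two]
          show c * W00 * x 0 + c * W01 * x 1 = _
          ring
        have hXx1 : X.mulVec x 1 = c * (W10 * x 0 + W11 * x 1) := by
          rw [hX_def]
          show dotProduct ![c * W10, c * W11] x = _
          rw [dotProduct, Fin.sum_univ_two]
          show c * W10 * x 0 + c * W11 * x 1 = _
          ring
        rw [ev_norm, ev_norm, hXx0, hXx1, Complex.normSq_mul, Complex.normSq_mul]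
        have hnc : Complex.normSq c = (β/α)^2 := by
          rw [hc_def, Complex.normSq_ofReal]
          have : (0:ℝ) ≤ β / α := by positivity
          nlinarith
        rw [hnc]
        have hkey : Complex.normSq (W00 * x 0 + W01 * x 1)
            + Complex.normSq (W10 * x 0 + W11 * x 1)
            = Complex.normSq (x 0) + Complex.normSq (x 1) := by
          have h := hiso (x 0) (x 1)
          rw [hconj_a, hconj_a, hconj_a, hconj_a] at h
          exact_mod_cast h
        rw [← mul_add, hkey, Real.sqrt_mul (by positivity)]
        rw [Real.sqrt_sq (by positivity)]
      calc opNorm X * α ≤ (β / α) * α := by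
            apply mul_le_mul_of_nonneg_right hXle (le_of_lt hα)
      _ = β := by field_simp

lemma opNorm_lt_one_of_mu_lt_one {θ : ℝ} {A : Matrix (Fin 2) (Fin 2) ℂ}
    (hμ : mu (EthetaSet θ) A < 1) : opNorm A < 1 := by
  by_contra hc
  push_neg at hc
  have key : ∀ c : ℝ, 1 < c → ∃ X ∈ EthetaSet θ, (1 - A * X).det = 0 ∧ opNorm X < c := by
    intro c hcgt
    have hrpos : (0:ℝ) < c⁻¹ := by positivity
    have hrlt : c⁻¹ < opNorm A := lt_of_lt_of_le (by
      rw [inv_lt_one_iff₀]; right; exact hcgt) hc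
    obtain ⟨x, hx1, hx2⟩ :=
      (LinearMap.toContinuousLinearMap (Matrix.toEuclideanLin A)).exists_lt_apply_of_lt_opNorm
        hrlt
    set xv : Fin 2 → ℂ := (WithLp.equiv 2 (Fin 2 → ℂ)) x with hxv
    have hevxv : ev xv = x := by simp [ev, hxv]
    have hAx : (LinearMap.toContinuousLinearMap (Matrix.toEuclideanLin A)) x
        = ev (A.mulVec xv) := by
      simp [ev, hxv, Matrix.toEuclideanLin_apply]
    rw [hAx] at hx2
    have hapos : (0:ℝ) < ‖ev (A.mulVec xv)‖ := lt_trans hrpos hx2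
    have hane : A.mulVec xv ≠ 0 := by
      intro h0
      rw [h0] at hapos
      have : ev 0 = (0 : EuclideanSpace ℂ (Fin 2)) := by simp [ev]
      rw [this, norm_zero] at hapos
      exact lt_irrefl _ hapos
    obtain ⟨X, hXmem, hXmap, hXnorm⟩ := exists_Etheta_contraction θ (A.mulVec xv) xv hane
    refine ⟨X, hXmem, ?_, ?_⟩
    · rw [← Matrix.exists_mulVec_eq_zero_iff]
      refine ⟨A.mulVec xv, hane, ?_⟩
      rw [Matrix.sub_mulVec, Matrix.one_mulVec, ← Matrix.mulVec_mulVec, hXmap, sub_self]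
    · have h1 : opNorm X * ‖ev (A.mulVec xv)‖ ≤ ‖ev xv‖ := hXnorm
      rw [hevxv] at h1
      have h2 : ‖x‖ < 1 := hx1
      have hcpos : (0:ℝ) < c := lt_trans one_pos hcgt
      have hinv : c⁻¹ * c = 1 := inv_mul_cancel₀ (ne_of_gt hcpos)
      by_contra hge
      push_neg at hge
      have hmm : c * ‖ev (A.mulVec xv)‖ ≤ opNorm X * ‖ev (A.mulVec xv)‖ :=
        mul_le_mul_of_nonneg_right hge (le_of_lt hapos)
      nlinarith
  obtain ⟨X0, hX0mem, hX0det, _⟩ := key 2 one_lt_two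
  have hexist : ∃ X ∈ EthetaSet θ, (1 - A * X).det = 0 := ⟨X0, hX0mem, hX0det⟩
  unfold mu at hμ
  rw [if_pos hexist] at hμ
  set S := {r : ℝ | ∃ X ∈ EthetaSet θ, (1 - A * X).det = 0 ∧ r = opNorm X} with hS
  have hSbdd : BddBelow S := ⟨0, by rintro r ⟨X, _, _, rfl⟩; exact opNorm_nonneg X⟩
  have hSne : S.Nonempty := ⟨opNorm X0, X0, hX0mem, hX0det, rfl⟩
  have hApos : 0 < opNorm A := lt_of_lt_of_le one_pos hc
  have hinfpos : 0 < sInf S := by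
    have h1 : (opNorm A)⁻¹ ≤ sInf S := by
      apply le_csInf hSne
      rintro r ⟨X, _, hXdet, rfl⟩
      have := one_le_opNorm_mul hXdet
      rw [inv_le_iff_one_le_mul₀ hApos]
      linarith
    have h2 : (0:ℝ) < (opNorm A)⁻¹ := by positivity
    linarith
  have hinfle : sInf S ≤ 1 := by
    by_contra hgt
    push_neg at hgt
    obtain ⟨X, hXmem, hXdet, hXlt⟩ := key (sInf S) hgt
    have : sInf S ≤ opNorm X := csInf_le hSbdd ⟨X, hXmem, hXdet, rfl⟩
    linarith
  have : (1:ℝ) ≤ (sInf S)⁻¹ := by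
    rw [le_inv_comm₀ one_pos hinfpos]
    simpa using hinfle
  linarith

/-! ### Forward direction: structure theory -/

lemma offdiag_mem (E : Submodule ℂ (Matrix (Fin 2) (Fin 2) ℂ))
    (hdiag : ∀ z1 z2 : ℂ, !![z1, 0; 0, z2] ∈ E)
    {X : Matrix (Fin 2) (Fin 2) ℂ} (hX : X ∈ E) : !![0, X 0 1; X 1 0, 0] ∈ E := by
  have h := E.sub_mem hX (hdiag (X 0 0) (X 1 1))
  have heq : X - !![X 0 0, 0; 0, X 1 1] = !![0, X 0 1; X 1 0, 0] := by
    ext i j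
    fin_cases i <;> fin_cases j <;> simp [Matrix.sub_apply]
  rwa [heq] at h

lemma decompose (M : Matrix (Fin 2) (Fin 2) ℂ) :
    M = !![M 0 0, 0; 0, M 1 1] + M 0 1 • !![0,1;0,0] + M 1 0 • !![0,0;1,0] := by
  ext i j
  fin_cases i <;> fin_cases j <;> simp [Matrix.add_apply, Matrix.smul_apply]

lemma univ_of_two_indep (E : Submodule ℂ (Matrix (Fin 2) (Fin 2) ℂ))
    (hdiag : ∀ z1 z2 : ℂ, !![z1, 0; 0, z2] ∈ E)
    {x1 y1 x2 y2 : ℂ} (h1 : !![0, x1; y1, 0] ∈ E) (h2 : !![0, x2; y2, 0] ∈ E)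
    (hd : x1 * y2 - x2 * y1 ≠ 0) : (E : Set (Matrix (Fin 2) (Fin 2) ℂ)) = Set.univ := by
  have he01 : !![0,(1:ℂ);0,0] ∈ E := by
    have h := E.add_mem (E.smul_mem (y2 / (x1*y2 - x2*y1)) h1)
      (E.smul_mem (-y1 / (x1*y2 - x2*y1)) h2)
    have heq : (y2 / (x1*y2 - x2*y1)) • !![0, x1; y1, 0]
        + (-y1 / (x1*y2 - x2*y1)) • !![0, x2; y2, 0] = !![0,(1:ℂ);0,0] := by
      have hd' : y2 * x1 - x2 * y1 ≠ 0 := by rw [mul_comm]; exact hd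
      ext i j
      fin_cases i <;> fin_cases j <;>
        simp [Matrix.add_apply, Matrix.smul_apply, smul_eq_mul] <;>
        field_simp <;> ring
    rwa [heq] at h
  have he10 : !![0,(0:ℂ);1,0] ∈ E := by
    have h := E.add_mem (E.smul_mem (-x2 / (x1*y2 - x2*y1)) h1)
      (E.smul_mem (x1 / (x1*y2 - x2*y1)) h2)
    have heq : (-x2 / (x1*y2 - x2*y1)) • !![0, x1; y1, 0]
        + (x1 / (x1*y2 - x2*y1)) • !![0, x2; y2, 0] = !![0,(0:ℂ);1,0] := by
      have hd' : y2 * x1 - x2 * y1 ≠ 0 := by rw [mul_comm]; exact hd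
      ext i j
      fin_cases i <;> fin_cases j <;>
        simp [Matrix.add_apply, Matrix.smul_apply, smul_eq_mul] <;>
        field_simp <;> ring
    rwa [heq] at h
  apply Set.eq_univ_of_forall
  intro M
  have : M ∈ E := by
    rw [decompose M]
    exact E.add_mem (E.add_mem (hdiag _ _) (E.smul_mem _ he01)) (E.smul_mem _ he10)
  exact this

lemma dichotomy (E : Submodule ℂ (Matrix (Fin 2) (Fin 2) ℂ))
    (hproper : (E : Set (Matrix (Fin 2) (Fin 2) ℂ)) ≠ Set.univ)
    (hdiag : ∀ z1 z2 : ℂ, !![z1, 0; 0, z2] ∈ E)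
    (hnot : ¬∃ θ : ℝ, (E : Set (Matrix (Fin 2) (Fin 2) ℂ)) = EthetaSet θ) :
    (∀ X ∈ E, X 1 0 ≠ 0 → Complex.abs (X 1 0) < Complex.abs (X 0 1)) ∨
    (∀ X ∈ E, X 0 1 ≠ 0 → Complex.abs (X 0 1) < Complex.abs (X 1 0)) := by
  by_contra hcon
  push_neg at hcon
  obtain ⟨⟨X1, hX1E, hX1ne, hX1le⟩, ⟨X2, hX2E, hX2ne, hX2le⟩⟩ := hcon
  set x1 := X1 0 1; set y1 := X1 1 0
  set x2 := X2 0 1; set y2 := X2 1 0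
  have h1 : !![0, x1; y1, 0] ∈ E := offdiag_mem E hdiag hX1E
  have h2 : !![0, x2; y2, 0] ∈ E := offdiag_mem E hdiag hX2E
  have hdep : x1 * y2 - x2 * y1 = 0 := by
    by_contra hd
    exact hproper (univ_of_two_indep E hdiag h1 h2 hd)
  have hx1ne : x1 ≠ 0 := by
    intro h0
    rw [h0, zero_mul, zero_sub, neg_eq_zero, mul_eq_zero] at hdep
    rcases hdep with h | h
    · exact hX2ne h
    · exact hX1ne h
  have habs : Complex.abs x1 = Complex.abs y1 := by
    have hc : y2 = (x2 / x1) * y1 := by field_simp; linear_combination hdep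
    have h2' : Complex.abs y2 ≤ Complex.abs x2 := hX2le
    rw [hc, map_mul, map_div₀] at h2'
    have hax1 : 0 < Complex.abs x1 := by
      rw [AbsoluteValue.pos_iff]; exact hx1ne
    have hax2 : 0 < Complex.abs x2 := by
      rw [AbsoluteValue.pos_iff]; exact hX2ne
    have h1' : Complex.abs x1 ≤ Complex.abs y1 := hX1le
    have : Complex.abs y1 ≤ Complex.abs x1 := by
      by_contra hy
      push_neg at hy
      have : Complex.abs x2 / Complex.abs x1 * Complex.abs y1
          > Complex.abs x2 / Complex.abs x1 * Complex.abs x1 := by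
        apply mul_lt_mul_of_pos_left hy
        positivity
      rw [div_mul_cancel₀] at this
      · linarith
      · exact ne_of_gt hax1
    linarith
  apply hnot
  set w : ℂ := y1 / x1 with hw_def
  have habsw : Complex.abs w = 1 := by
    rw [hw_def, map_div₀, ← habs, div_self]
    rw [ne_eq, map_eq_zero]
    exact hx1ne
  refine ⟨w.arg, ?_⟩
  have hexp : Complex.exp (w.arg * Complex.I) = w := by
    have := Complex.norm_mul_exp_arg_mul_I w
    rwa [show ‖w‖ = Complex.abs w from rfl, habsw, Complex.ofReal_one, one_mul] at this
  ext M
  simp only [SetLike.mem_coe, EthetaSet, Set.mem_setOf_eq]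
  constructor
  · intro hME
    refine ⟨M 0 0, M 1 1, M 0 1, ?_⟩
    have hMdep : M 0 1 * y1 - x1 * M 1 0 = 0 := by
      by_contra hd
      have hMoff : !![0, M 0 1; M 1 0, 0] ∈ E := offdiag_mem E hdiag hME
      exact hproper (univ_of_two_indep E hdiag hMoff h1 hd)
    have hM10 : M 1 0 = Complex.exp (w.arg * Complex.I) * M 0 1 := by
      rw [hexp, hw_def]
      field_simp
      linear_combination -hMdep
    ext i j
    fin_cases i <;> fin_cases j <;> simp [hM10]
  · rintro ⟨z1, z2, v, rfl⟩
    rw [hexp]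
    have heq : !![z1, v; w * v, z2] = !![z1, 0; 0, z2] + (v / x1) • !![0, x1; y1, 0] := by
      ext i j
      fin_cases i <;> fin_cases j <;>
        simp [Matrix.add_apply, Matrix.smul_apply, smul_eq_mul, hw_def] <;>
        field_simp <;> ring
    rw [heq]
    exact E.add_mem (hdiag _ _) (E.smul_mem _ h1)

/-! ### The counterexamples -/

lemma det_one_sub_e01_mul (X : Matrix (Fin 2) (Fin 2) ℂ) :
    (1 - !![0,(1:ℂ);0,0] * X).det = 1 - X 1 0 := by
  rw [Matrix.det_fin_two]
  simp [Matrix.sub_apply, Matrix.mul_apply, Fin.sum_univ_two, Matrix.one_apply,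
    Matrix.vecMul, dotProduct]

lemma det_one_sub_e10_mul (X : Matrix (Fin 2) (Fin 2) ℂ) :
    (1 - !![0,(0:ℂ);1,0] * X).det = 1 - X 0 1 := by
  rw [Matrix.det_fin_two]
  simp [Matrix.sub_apply, Matrix.mul_apply, Fin.sum_univ_two, Matrix.one_apply,
    Matrix.vecMul, dotProduct]

lemma mu_e01_lt_one (E : Submodule ℂ (Matrix (Fin 2) (Fin 2) ℂ))
    (hdiag : ∀ z1 z2 : ℂ, !![z1, 0; 0, z2] ∈ E)
    (Ha : ∀ X ∈ E, X 1 0 ≠ 0 → Complex.abs (X 1 0) < Complex.abs (X 0 1)) :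
    mu (E : Set (Matrix (Fin 2) (Fin 2) ℂ)) !![0,(1:ℂ);0,0] < 1 := by
  unfold mu
  split_ifs with h
  · obtain ⟨X0, hX0E, hX0det⟩ := h
    rw [det_one_sub_e01_mul, sub_eq_zero] at hX0det
    set x0 : ℂ := X0 0 1 with hx0
    have habs0 : 1 < Complex.abs x0 := by
      have := Ha X0 hX0E (by rw [← hX0det]; exact one_ne_zero)
      rwa [← hX0det, map_one] at this
    have huniq : ∀ X ∈ (E : Set (Matrix (Fin 2) (Fin 2) ℂ)),
        (1 - !![0,(1:ℂ);0,0] * X).det = 0 → X 0 1 = x0 := by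
      intro X hXE hXdet
      rw [det_one_sub_e01_mul, sub_eq_zero] at hXdet
      by_contra hne
      have ht : X 0 1 - x0 ≠ 0 := sub_ne_zero.mpr hne
      have hoffX : !![0, X 0 1; X 1 0, 0] ∈ E := offdiag_mem E hdiag hXE
      have hoffX0 : !![0, x0; X0 1 0, 0] ∈ E := offdiag_mem E hdiag hX0E
      have hY : !![0, X 0 1; X 1 0, 0] - !![0, x0; X0 1 0, 0] ∈ E :=
        E.sub_mem hoffX hoffX0
      have he01 : !![0,(1:ℂ);0,0] ∈ E := by
        have h2 := E.smul_mem (X 0 1 - x0)⁻¹ hY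
        have heq : (X 0 1 - x0)⁻¹ • (!![0, X 0 1; X 1 0, 0] - !![0, x0; X0 1 0, 0])
            = !![0,(1:ℂ);0,0] := by
          ext i j
          fin_cases i <;> fin_cases j <;>
            simp [Matrix.sub_apply, Matrix.smul_apply, smul_eq_mul, ← hX0det, ← hXdet]
          field_simp
        rwa [heq] at h2
      have he10 : !![0,(0:ℂ);1,0] ∈ E := by
        have h2 := E.sub_mem hoffX0 (E.smul_mem x0 he01)
        have heq : !![0, x0; X0 1 0, 0] - x0 • !![0,(1:ℂ);0,0] = !![0,(0:ℂ);1,0] := by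
          ext i j
          fin_cases i <;> fin_cases j <;>
            simp [Matrix.sub_apply, Matrix.smul_apply, smul_eq_mul, ← hX0det]
        rwa [heq] at h2
      have := Ha _ he10 (by norm_num)
      simp at this
      linarith
    set S := {r : ℝ | ∃ X ∈ (E : Set (Matrix (Fin 2) (Fin 2) ℂ)),
        (1 - !![0,(1:ℂ);0,0] * X).det = 0 ∧ r = opNorm X} with hS
    have hlb : ∀ r ∈ S, Complex.abs x0 ≤ r := by
      rintro r ⟨X, hXE, hXdet, rfl⟩
      have hX01 : X 0 1 = x0 := huniq X hXE hXdet
      calc Complex.abs x0 = Complex.abs (X 0 1) := by rw [hX01]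
      _ ≤ opNorm X := abs_entry_le_opNorm X 0 1
    have hSne : S.Nonempty := ⟨opNorm X0, X0, hX0E, by
      rw [det_one_sub_e01_mul, sub_eq_zero]; exact hX0det, rfl⟩
    have hinf : Complex.abs x0 ≤ sInf S := le_csInf hSne hlb
    rw [inv_lt_one_iff₀]
    right
    linarith
  · norm_num

lemma mu_e10_lt_one (E : Submodule ℂ (Matrix (Fin 2) (Fin 2) ℂ))
    (hdiag : ∀ z1 z2 : ℂ, !![z1, 0; 0, z2] ∈ E)
    (Hb : ∀ X ∈ E, X 0 1 ≠ 0 → Complex.abs (X 0 1) < Complex.abs (X 1 0)) :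
    mu (E : Set (Matrix (Fin 2) (Fin 2) ℂ)) !![0,(0:ℂ);1,0] < 1 := by
  unfold mu
  split_ifs with h
  · obtain ⟨X0, hX0E, hX0det⟩ := h
    rw [det_one_sub_e10_mul, sub_eq_zero] at hX0det
    set x0 : ℂ := X0 1 0 with hx0
    have habs0 : 1 < Complex.abs x0 := by
      have := Hb X0 hX0E (by rw [← hX0det]; exact one_ne_zero)
      rwa [← hX0det, map_one] at this
    have huniq : ∀ X ∈ (E : Set (Matrix (Fin 2) (Fin 2) ℂ)),
        (1 - !![0,(0:ℂ);1,0] * X).det = 0 → X 1 0 = x0 := by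
      intro X hXE hXdet
      rw [det_one_sub_e10_mul, sub_eq_zero] at hXdet
      by_contra hne
      have ht : X 1 0 - x0 ≠ 0 := sub_ne_zero.mpr hne
      have hoffX : !![0, X 0 1; X 1 0, 0] ∈ E := offdiag_mem E hdiag hXE
      have hoffX0 : !![0, X0 0 1; x0, 0] ∈ E := offdiag_mem E hdiag hX0E
      have hY : !![0, X 0 1; X 1 0, 0] - !![0, X0 0 1; x0, 0] ∈ E :=
        E.sub_mem hoffX hoffX0
      have he10 : !![0,(0:ℂ);1,0] ∈ E := by
        have h2 := E.smul_mem (X 1 0 - x0)⁻¹ hY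
        have heq : (X 1 0 - x0)⁻¹ • (!![0, X 0 1; X 1 0, 0] - !![0, X0 0 1; x0, 0])
            = !![0,(0:ℂ);1,0] := by
          ext i j
          fin_cases i <;> fin_cases j <;>
            simp [Matrix.sub_apply, Matrix.smul_apply, smul_eq_mul, ← hX0det, ← hXdet]
          field_simp
        rwa [heq] at h2
      have he01 : !![0,(1:ℂ);0,0] ∈ E := by
        have h2 := E.sub_mem hoffX0 (E.smul_mem x0 he10)
        have heq : !![0, X0 0 1; x0, 0] - x0 • !![0,(0:ℂ);1,0] = !![0,(1:ℂ);0,0] := by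
          ext i j
          fin_cases i <;> fin_cases j <;>
            simp [Matrix.sub_apply, Matrix.smul_apply, smul_eq_mul, ← hX0det]
        rwa [heq] at h2
      have := Hb _ he01 (by norm_num)
      simp at this
      linarith
    set S := {r : ℝ | ∃ X ∈ (E : Set (Matrix (Fin 2) (Fin 2) ℂ)),
        (1 - !![0,(0:ℂ);1,0] * X).det = 0 ∧ r = opNorm X} with hS
    have hlb : ∀ r ∈ S, Complex.abs x0 ≤ r := by
      rintro r ⟨X, hXE, hXdet, rfl⟩
      have hX10 : X 1 0 = x0 := huniq X hXE hXdet
      calc Complex.abs x0 = Complex.abs (X 1 0) := by rw [hX10]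
      _ ≤ opNorm X := abs_entry_le_opNorm X 1 0
    have hSne : S.Nonempty := ⟨opNorm X0, X0, hX0E, by
      rw [det_one_sub_e10_mul, sub_eq_zero]; exact hX0det, rfl⟩
    have hinf : Complex.abs x0 ≤ sInf S := le_csInf hSne hlb
    rw [inv_lt_one_iff₀]
    right
    linarith
  · norm_num

lemma not_mem_domF : ((0:ℂ), (0:ℂ), (0:ℂ), (1:ℂ)) ∉ domF := by
  rintro ⟨B, hBnorm, hBeq⟩
  simp only [Prod.mk.injEq] at hBeq
  obtain ⟨h00, h11, hdet, hsum⟩ := hBeq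
  rw [Matrix.det_fin_two] at hdet
  have hprod : B 0 1 * B 1 0 = 0 := by linear_combination hdet - B 1 1 * h00
  rcases mul_eq_zero.mp hprod with h | h
  · have h10 : B 1 0 = 1 := by rw [h, zero_add] at hsum; exact hsum.symm
    have := abs_entry_le_opNorm B 1 0
    rw [h10, map_one] at this
    linarith
  · have h01 : B 0 1 = 1 := by rw [h, add_zero] at hsum; exact hsum.symm
    have := abs_entry_le_opNorm B 0 1
    rw [h01, map_one] at this
    linarith

/-- Theorem 4.3: a proper linear subspace E of M₂(ℂ) containing all diagonal matrices satisfies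
𝔽_{μ_E} = 𝔽 if and only if E = E_θ for some θ ∈ ℝ. -/
theorem stmt19 (E : Submodule ℂ (Matrix (Fin 2) (Fin 2) ℂ))
    (hproper : (E : Set (Matrix (Fin 2) (Fin 2) ℂ)) ≠ Set.univ)
    (hdiag : ∀ z1 z2 : ℂ, !![z1, 0; 0, z2] ∈ E) :
    Fmu (E : Set (Matrix (Fin 2) (Fin 2) ℂ)) = domF ↔
      ∃ θ : ℝ, (E : Set (Matrix (Fin 2) (Fin 2) ℂ)) = EthetaSet θ := by
  constructor
  · intro hFmu
    by_contra hnot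
    rcases dichotomy E hproper hdiag hnot with Ha | Hb
    · have hmem : ((0:ℂ),(0:ℂ),(0:ℂ),(1:ℂ)) ∈ Fmu (E : Set (Matrix (Fin 2) (Fin 2) ℂ)) := by
        refine ⟨!![0,(1:ℂ);0,0], mu_e01_lt_one E hdiag Ha, ?_⟩
        norm_num [Matrix.det_fin_two]
      rw [hFmu] at hmem
      exact not_mem_domF hmem
    · have hmem : ((0:ℂ),(0:ℂ),(0:ℂ),(1:ℂ)) ∈ Fmu (E : Set (Matrix (Fin 2) (Fin 2) ℂ)) := by
        refine ⟨!![0,(0:ℂ);1,0], mu_e10_lt_one E hdiag Hb, ?_⟩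
        norm_num [Matrix.det_fin_two]
      rw [hFmu] at hmem
      exact not_mem_domF hmem
  · rintro ⟨θ, hE⟩
    rw [hE]
    ext p
    constructor
    · rintro ⟨A, hmu, rfl⟩
      exact ⟨A, opNorm_lt_one_of_mu_lt_one hmu, rfl⟩
    · rintro ⟨A, hnorm, rfl⟩
      exact ⟨A, mu_lt_one_of_opNorm_lt_one _ A hnorm, rfl⟩
end
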